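/- Under equal fair allocation with homogeneous zero-cost agents and strictly positive task rewards r(t_j, p) shared equally (individual utility r(t_j,p)/p), the global utility of a partition equals Σ_j r(t_j, |S_j|)·[|S_j| > 0]; consequently if each r(t_j, ·) is non-decreasing in p, any Nash stable partition's global utility is at least half the maximum of Σ_j r(t_j, |S_j|) over all partitions. -/

import Mathlib

def coalSize {A τ : Type*} [Fintype A] [DecidableEq τ] (π : A → τ) (j : τ) : ℕ :=
  (Finset.univ.filter fun k => π k = j).card

def joinSize {A τ : Type*} [Fintype A] [DecidableEq τ] (π : A → τ) (i : A) (j : τ) : ℕ :=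
  if π i = j then coalSize π j else coalSize π j + 1

lemma coalSize_pos {A τ : Type*} [Fintype A] [DecidableEq τ] (π : A → τ) (i : A) :
    1 ≤ coalSize π (π i) := by
  apply Finset.card_pos.mpr
  exact ⟨i, by simp⟩

lemma sum_share {A τ : Type*} [Fintype A] [Fintype τ] [DecidableEq τ]
    (r : τ → ℕ → ℝ) (σ : A → τ) :
    (∑ i : A, r (σ i) (coalSize σ (σ i)) / (coalSize σ (σ i) : ℝ))
      = ∑ j ∈ Finset.univ.filter fun j => coalSize σ j ≠ 0, r j (coalSize σ j) := by
  rw [← Finset.sum_fiberwise' Finset.univ σ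
      (fun j => r j (coalSize σ j) / (coalSize σ j : ℝ)), Finset.sum_filter]
  refine Finset.sum_congr rfl fun j _ => ?_
  rw [Finset.sum_const]
  have hcard : (Finset.univ.filter fun i => σ i = j).card = coalSize σ j := rfl
  rw [hcard, nsmul_eq_mul]
  by_cases h : coalSize σ j = 0
  · simp [h]
  · have hc : (coalSize σ j : ℝ) ≠ 0 := Nat.cast_ne_zero.mpr h
    simp only [h, if_neg, ite_not, if_false]
    field_simp

/-- Equal fair allocation with homogeneous zero-cost agents:
`u_i(t_j, p) = r(t_j, p)/p` with `r(t_j, p) > 0` non-decreasing in `p` and `r(t_j, p)/p`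
non-increasing (SPAO).  The global utility of a partition equals
`Σ_{j : S_j ≠ ∅} r(t_j, |S_j|)`; consequently any Nash stable partition's global utility is
at least half the maximum of `Σ_j r(t_j, |S_j|)` over all partitions. -/
theorem equal_sharing_half_bound
    {A τ : Type*} [Fintype A] [Nonempty A] [Fintype τ] [DecidableEq τ]
    (r : τ → ℕ → ℝ)
    (hpos : ∀ (j : τ) (p : ℕ), 1 ≤ p → 0 < r j p)
    (hmono : ∀ (j : τ) (p q : ℕ), p ≤ q → r j p ≤ r j q)
    (hshare : ∀ (j : τ) (p q : ℕ), 1 ≤ p → p ≤ q → r j q / (q : ℝ) ≤ r j p / (p : ℝ))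
    (π : A → τ)
    (hNash : ∀ (i : A) (j : τ),
      r (π i) (coalSize π (π i)) / (coalSize π (π i) : ℝ)
        ≥ r j (joinSize π i j) / (joinSize π i j : ℝ)) :
    (∑ i : A, r (π i) (coalSize π (π i)) / (coalSize π (π i) : ℝ))
      = (∑ j ∈ Finset.univ.filter fun j => coalSize π j ≠ 0, r j (coalSize π j)) ∧
    ∀ π' : A → τ,
      (∑ j ∈ Finset.univ.filter fun j => coalSize π' j ≠ 0, r j (coalSize π' j))
        ≤ 2 * ∑ j ∈ Finset.univ.filter fun j => coalSize π j ≠ 0, r j (coalSize π j) := by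
  classical
  refine ⟨sum_share r π, fun π' => ?_⟩
  set u : A → ℝ := fun i => r (π i) (coalSize π (π i)) / (coalSize π (π i) : ℝ) with hu
  have hu_pos : ∀ i, 0 < u i := fun i =>
    div_pos (hpos _ _ (coalSize_pos π i)) (by exact_mod_cast coalSize_pos π i)
  -- key per-agent bound when the coalition grows
  have key : ∀ i : A, coalSize π (π' i) < coalSize π' (π' i) →
      r (π' i) (coalSize π' (π' i)) / (coalSize π' (π' i) : ℝ) ≤ u i := by
    intro i h
    have hj1 : 1 ≤ joinSize π i (π' i) := by
      unfold joinSize; split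
      · next heq => rw [← heq]; exact coalSize_pos π i
      · omega
    have hj2 : joinSize π i (π' i) ≤ coalSize π' (π' i) := by
      unfold joinSize; split <;> omega
    calc r (π' i) (coalSize π' (π' i)) / (coalSize π' (π' i) : ℝ)
        ≤ r (π' i) (joinSize π i (π' i)) / (joinSize π i (π' i) : ℝ) :=
          hshare _ _ _ hj1 hj2
      _ ≤ u i := hNash i (π' i)
  set m : τ → ℕ := coalSize π' with hm
  set n : τ → ℕ := coalSize π with hn
  set S' : Finset τ := Finset.univ.filter fun j => m j ≠ 0 with hS'
  have hsplit : (∑ j ∈ S', r j (m j))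
      = (∑ j ∈ S'.filter fun j => m j ≤ n j, r j (m j))
        + ∑ j ∈ S'.filter fun j => ¬ m j ≤ n j, r j (m j) :=
    (Finset.sum_filter_add_sum_filter_not _ _ _).symm
  have bound1 : (∑ j ∈ S'.filter fun j => m j ≤ n j, r j (m j))
      ≤ ∑ j ∈ Finset.univ.filter fun j => n j ≠ 0, r j (n j) := by
    calc (∑ j ∈ S'.filter fun j => m j ≤ n j, r j (m j))
        ≤ ∑ j ∈ S'.filter fun j => m j ≤ n j, r j (n j) := by
          refine Finset.sum_le_sum fun j hj => hmono j _ _ ?_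
          exact (Finset.mem_filter.mp hj).2
      _ ≤ ∑ j ∈ Finset.univ.filter fun j => n j ≠ 0, r j (n j) := by
          refine Finset.sum_le_sum_of_subset_of_nonneg ?_ ?_
          · intro j hj
            simp only [Finset.mem_filter, hS', Finset.mem_univ, true_and] at hj ⊢
            omega
          · intro j hj _
            simp only [Finset.mem_filter, Finset.mem_univ, true_and] at hj
            exact le_of_lt (hpos j (n j) (by omega))
  have bound2 : (∑ j ∈ S'.filter fun j => ¬ m j ≤ n j, r j (m j)) ≤ ∑ i : A, u i := by
    have step1 : (∑ j ∈ S'.filter fun j => ¬ m j ≤ n j, r j (m j))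
        ≤ ∑ j ∈ S'.filter fun j => ¬ m j ≤ n j,
            ∑ i ∈ Finset.univ.filter fun i => π' i = j, u i := by
      refine Finset.sum_le_sum fun j hj => ?_
      simp only [Finset.mem_filter, hS', Finset.mem_univ, true_and] at hj
      have hmne : (m j : ℝ) ≠ 0 := Nat.cast_ne_zero.mpr hj.1
      have hcard : (Finset.univ.filter fun i => π' i = j).card = m j := rfl
      have hrw : r j (m j) = ∑ i ∈ Finset.univ.filter fun i => π' i = j,
          r j (m j) / (m j : ℝ) := by
        rw [Finset.sum_const, hcard, nsmul_eq_mul]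
        field_simp
      rw [hrw]
      refine Finset.sum_le_sum fun i hi => ?_
      simp only [Finset.mem_filter, Finset.mem_univ, true_and] at hi
      subst hi
      exact key i (by omega)
    refine step1.trans ?_
    calc (∑ j ∈ S'.filter fun j => ¬ m j ≤ n j,
            ∑ i ∈ Finset.univ.filter fun i => π' i = j, u i)
        ≤ ∑ j : τ, ∑ i ∈ Finset.univ.filter fun i => π' i = j, u i := by
          refine Finset.sum_le_sum_of_subset_of_nonneg (Finset.subset_univ _) ?_
          intro j _ _
          exact Finset.sum_nonneg fun i _ => (hu_pos i).le
      _ = ∑ i : A, u i := Finset.sum_fiberwise Finset.univ π' u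
  have hSW : (∑ i : A, u i) = ∑ j ∈ Finset.univ.filter fun j => n j ≠ 0, r j (n j) :=
    sum_share r π
  rw [hsplit, two_mul]
  exact add_le_add bound1 (bound2.trans_eq hSW)
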